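/- Let 𝒜 be an abelian category and T₁, T₂ objects of 𝒜, and let m, n ≥ 1. Then [T₁]_m • [T₂]_n ⊆ [T₁ ⊕ T₂]_{m+n}. -/
import Mathlib


open CategoryTheory Limits

attribute [local instance] CategoryTheory.Limits.HasFiniteBiproducts.of_hasFiniteProducts

noncomputable section

universe v u

variable {C : Type u} [Category.{v} C] [Abelian C]

/-- `add 𝒰`: the class of direct summands of finite direct sums of objects of `𝒰`. -/
def addClosure (S : Set C) : Set C :=
  {X | ∃ (n : ℕ) (g : Fin n → C), (∀ k, g k ∈ S) ∧
    ∃ (s : X ⟶ ⨁ g) (p : (⨁ g) ⟶ X), s ≫ p = 𝟙 X}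

lemma retract_mem_addClosure {S : Set C} {X Y : C} (hY : Y ∈ addClosure S)
    (s : X ⟶ Y) (p : Y ⟶ X) (h : s ≫ p = 𝟙 X) : X ∈ addClosure S := by
  obtain ⟨n, g, hg, s', p', h'⟩ := hY
  exact ⟨n, g, hg, s ≫ s', p' ≫ p, by
    rw [Category.assoc, ← Category.assoc s', h', Category.id_comp, h]⟩

lemma mem_addClosure_self {S : Set C} {X : C} (h : X ∈ S) : X ∈ addClosure S :=
  ⟨1, fun _ => X, fun _ => h, biproduct.ι (fun _ : Fin 1 => X) 0, biproduct.π (fun _ : Fin 1 => X) 0, by simp⟩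

lemma addClosure_mono {S T : Set C} (h : S ⊆ T) : addClosure S ⊆ addClosure T := by
  rintro X ⟨n, g, hg, s, p, hsp⟩
  exact ⟨n, g, fun k => h (hg k), s, p, hsp⟩

lemma mem_addClosure_of_retract_biproduct {ι : Type} [Fintype ι] {S : Set C} {g : ι → C}
    (hg : ∀ i, g i ∈ addClosure S) {X : C} (s : X ⟶ ⨁ g) (p : (⨁ g) ⟶ X)
    (h : s ≫ p = 𝟙 X) : X ∈ addClosure S := by
  choose n H hH s' p' hsp' using hg
  -- combine: X retract of ⨁ g retract of ⨁_{i} ⨁ (H i) retract of ⨁ over sigma, reindex to Fin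
  let σ := (i : ι) × Fin (n i)
  let famσ : σ → C := fun a => H a.1 a.2
  let e : σ ≃ Fin (Fintype.card σ) := Fintype.equivFin σ
  let k : Fin (Fintype.card σ) → C := fun a => famσ (e.symm a)
  refine ⟨Fintype.card σ, k, fun a => hH _ _, ?_⟩
  let u₁ : (⨁ g) ⟶ ⨁ (fun i => ⨁ (H i)) := biproduct.map s'
  let v₁ : (⨁ (fun i => ⨁ (H i))) ⟶ ⨁ g := biproduct.map p'
  have h₁ : u₁ ≫ v₁ = 𝟙 _ := by
    ext j
    simp [u₁, v₁, hsp']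
  let u₂ : (⨁ (fun i => ⨁ (H i))) ⟶ ⨁ famσ :=
    biproduct.lift (fun a => biproduct.π _ a.1 ≫ biproduct.π (H a.1) a.2)
  let v₂ : (⨁ famσ) ⟶ ⨁ (fun i => ⨁ (H i)) :=
    biproduct.lift (fun i => biproduct.lift (fun j => biproduct.π famσ ⟨i, j⟩))
  have h₂ : u₂ ≫ v₂ = 𝟙 _ := by
    ext i j
    simp [u₂, v₂]
  let u₃ : (⨁ famσ) ⟶ ⨁ k := biproduct.lift (fun a => biproduct.π famσ (e.symm a))
  let v₃ : (⨁ k) ⟶ ⨁ famσ :=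
    biproduct.lift (fun x => biproduct.π k (e x) ≫
      eqToHom (congrArg famσ (e.symm_apply_apply x)))
  have h₃ : u₃ ≫ v₃ = 𝟙 _ := by
    ext x
    simp only [v₃, u₃, Category.assoc, biproduct.lift_π, biproduct.lift_π_assoc, Category.id_comp]
    rw [biproduct.π_comp_eqToHom famσ (e.symm_apply_apply x)]
  refine ⟨s ≫ u₁ ≫ u₂ ≫ u₃, v₃ ≫ v₂ ≫ v₁ ≫ p, ?_⟩
  simp only [Category.assoc]
  rw [← Category.assoc u₃, h₃, Category.id_comp, ← Category.assoc u₂, h₂, Category.id_comp,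
    ← Category.assoc u₁, h₁, Category.id_comp, h]

lemma addClosure_idem {S : Set C} : addClosure (addClosure S) ⊆ addClosure S := by
  rintro X ⟨n, g, hg, s, p, hsp⟩
  exact mem_addClosure_of_retract_biproduct hg s p hsp
/-- The operation `𝒰₁ • 𝒰₂`:  `add` of the class of objects `A` admitting a short exact
sequence `0 → U₁ → A → U₂ → 0` with `U₁ ∈ 𝒰₁` and `U₂ ∈ 𝒰₂`. -/
def bulletOp (S T : Set C) : Set C :=
  addClosure {X | ∃ (U V : C) (_ : U ∈ S) (_ : V ∈ T) (f : U ⟶ X) (g : X ⟶ V)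
    (w : f ≫ g = 0), (ShortComplex.mk f g w).ShortExact}

/-- `[T]_n`:  `[T]₀` is the class of zero objects, `[T]₁ = add T` and
`[T]_{n+1} = [T]₁ • [T]_n`. -/
def bracket (T : C) : ℕ → Set C
  | 0 => {X | IsZero X}
  | n + 1 => bulletOp (addClosure {T}) (bracket T n)

/-- A finite biproduct of short exact sequences is short exact. -/
lemma shortExact_biproduct {ι : Type} [Fintype ι] {U A V : ι → C}
    (f : ∀ i, U i ⟶ A i) (g : ∀ i, A i ⟶ V i) (w : ∀ i, f i ≫ g i = 0)
    (h : ∀ i, (ShortComplex.mk (f i) (g i) (w i)).ShortExact) :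
    (ShortComplex.mk (biproduct.map f) (biproduct.map g)
      (by ext j; simp [reassoc_of% (w j), w j])).ShortExact := by
  have hm : ∀ i, Mono (f i) := fun i => (h i).mono_f
  have he : ∀ i, Epi (g i) := fun i => (h i).epi_g
  have mono : Mono (biproduct.map f) := by
    rw [Preadditive.mono_iff_cancel_zero]
    intro Z q hq
    ext j
    haveI := hm j
    simp only [zero_comp]
    apply zero_of_comp_mono (f j)
    rw [Category.assoc, ← biproduct.map_π f j, ← Category.assoc, hq, zero_comp]
  have epi : Epi (biproduct.map g) := by
    rw [Preadditive.epi_iff_cancel_zero]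
    intro Z q hq
    ext j
    haveI := he j
    simp only [comp_zero]
    apply zero_of_epi_comp (g j)
    rw [← Category.assoc, ← biproduct.ι_map g j, Category.assoc, hq, comp_zero]
  refine ShortComplex.ShortExact.mk' ?_ mono epi
  apply ShortComplex.exact_of_f_is_kernel
  refine KernelFork.IsLimit.ofι _ _
    (fun {Z} q hq => biproduct.lift (fun j => by
      haveI := hm j
      exact ((h j).exact.lift (q ≫ biproduct.π A j) (by
        rw [Category.assoc, ← biproduct.map_π g j, ← Category.assoc, hq, zero_comp]))))
    (fun {Z} q hq => ?_) (fun {Z} q hq m hmq => ?_)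
  · ext j
    haveI := hm j
    rw [Category.assoc, biproduct.map_π, ← Category.assoc, biproduct.lift_π]
    exact (h j).exact.lift_f _ _
  · have hmq' : m ≫ biproduct.map f = q := hmq
    rw [← cancel_mono (biproduct.map f)]
    ext j
    haveI := hm j
    rw [Category.assoc, Category.assoc, biproduct.map_π, ← Category.assoc,
      ← Category.assoc, biproduct.lift_π, (h j).exact.lift_f, ← hmq',
      Category.assoc, Category.assoc, biproduct.map_π, ← Category.assoc]

/-- Enlarging the subobject of a short exact sequence along a split mono: `A` is a direct
summand of an extension of `W` by `B'`. -/
lemma shortExact_extend {B A W B' : C} (f : B ⟶ A) (g : A ⟶ W) (w : f ≫ g = 0)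
    (hse : (ShortComplex.mk f g w).ShortExact) (s : B ⟶ B') (p : B' ⟶ B)
    (hsp : s ≫ p = 𝟙 B) :
    ∃ (A' : C) (f' : B' ⟶ A') (g' : A' ⟶ W) (w' : f' ≫ g' = 0),
      (ShortComplex.mk f' g' w').ShortExact ∧
      ∃ (u : A ⟶ A') (v : A' ⟶ A), u ≫ v = 𝟙 A := by
  haveI : Mono f := hse.mono_f
  haveI : Epi g := hse.epi_g
  haveI : Mono (s ≫ p) := by rw [hsp]; infer_instance
  haveI : Mono s := mono_of_mono s p
  set c : B ⟶ B' ⊞ A := biprod.lift s f with hc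
  haveI : Mono (c ≫ (biprod.fst : B' ⊞ A ⟶ B')) := by
    rw [hc, biprod.lift_fst]; infer_instance
  haveI : Mono c := mono_of_mono c biprod.fst
  set π : B' ⊞ A ⟶ cokernel c := cokernel.π c with hπ
  have exact₀ : (ShortComplex.mk c π (cokernel.condition c)).Exact :=
    ShortComplex.exact_of_g_is_cokernel _ (cokernelIsCokernel c)
  set m : B' ⟶ cokernel c := biprod.inl ≫ π with hm
  have mono_m : Mono m := by
    rw [Preadditive.mono_iff_cancel_zero]
    intro Z q hq
    obtain ⟨l, hl⟩ := exact₀.lift' (q ≫ biprod.inl) (by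
      rw [Category.assoc]; exact hq)
    have hl0 : l = 0 := by
      apply zero_of_comp_mono f
      have := congrArg (fun x => x ≫ (biprod.snd : B' ⊞ A ⟶ A)) hl
      simpa [hc] using this
    rw [hl0, zero_comp] at hl
    have hq0 : q ≫ (biprod.inl : B' ⟶ B' ⊞ A) = 0 := hl.symm
    calc q = (q ≫ (biprod.inl : B' ⟶ B' ⊞ A)) ≫ biprod.fst := by simp
      _ = 0 := by rw [hq0, zero_comp]
  set q' : cokernel c ⟶ W := cokernel.desc c (biprod.desc 0 g) (by
    rw [hc, biprod.lift_desc, comp_zero, w, zero_add]) with hq'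
  have hπq' : π ≫ q' = biprod.desc 0 g := cokernel.π_desc _ _ _
  have w' : m ≫ q' = 0 := by
    rw [hm, Category.assoc, hπq']; simp
  haveI : Epi ((biprod.inr ≫ π) ≫ q') := by
    rw [Category.assoc, hπq', biprod.inr_desc]; infer_instance
  haveI epi_q' : Epi q' := epi_of_epi (biprod.inr ≫ π) q'
  have key : ∀ {Z : C} (t : cokernel c ⟶ Z), m ≫ t = 0 →
      ∃ v : W ⟶ Z, q' ≫ v = t := by
    intro Z t ht
    have h0 : c ≫ π ≫ t = 0 := by rw [← Category.assoc, cokernel.condition, zero_comp]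
    have hml : biprod.inl ≫ π ≫ t = 0 := by rw [← Category.assoc, ← hm]; exact ht
    have hf : f ≫ biprod.inr ≫ π ≫ t = 0 := by
      have hceq : c = s ≫ biprod.inl + f ≫ biprod.inr := biprod.lift_eq
      have h2 : c ≫ π ≫ t =
          s ≫ biprod.inl ≫ π ≫ t + f ≫ biprod.inr ≫ π ≫ t :=
        calc c ≫ π ≫ t = (s ≫ biprod.inl + f ≫ biprod.inr) ≫ π ≫ t := by rw [← hceq]
          _ = s ≫ biprod.inl ≫ π ≫ t + f ≫ biprod.inr ≫ π ≫ t := by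
              rw [Preadditive.add_comp, Category.assoc, Category.assoc]
      rw [h0, hml, comp_zero, zero_add] at h2
      exact h2.symm
    refine ⟨hse.exact.desc (biprod.inr ≫ π ≫ t) hf, ?_⟩
    rw [← cancel_epi π, ← Category.assoc, hπq']
    ext
    · rw [biprod.inl_desc_assoc, zero_comp]
      exact hml.symm
    · rw [biprod.inr_desc_assoc]
      exact hse.exact.g_desc _ _
  have exact' : (ShortComplex.mk m q' w').Exact := by
    apply ShortComplex.exact_of_g_is_cokernel
    refine CokernelCofork.IsColimit.ofπ _ _
      (fun {Z} t ht => (key t ht).choose)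
      (fun {Z} t ht => (key t ht).choose_spec)
      (fun {Z} t ht r hr => ?_)
    rw [← cancel_epi q', (key t ht).choose_spec]
    exact hr
  refine ⟨cokernel c, m, q', w', ShortComplex.ShortExact.mk' exact' mono_m epi_q',
    biprod.inr ≫ π, cokernel.desc c (biprod.desc (-(p ≫ f)) (𝟙 A)) ?_, ?_⟩
  · rw [hc, biprod.lift_desc, Category.comp_id, Preadditive.comp_neg,
      ← Category.assoc, hsp, Category.id_comp, neg_add_cancel]
  · rw [Category.assoc, cokernel.π_desc, biprod.inr_desc]

/-- Noether: given monos `S → B → A` with cokernels `T` and `W`, we get short exact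
sequences `0 → S → A → A' → 0` and `0 → T → A' → W → 0` where `A' = A/S`. -/
lemma noether {S B T A W : C} (j : S ⟶ B) (t : B ⟶ T) (w₁ : j ≫ t = 0)
    (h₁ : (ShortComplex.mk j t w₁).ShortExact)
    (i : B ⟶ A) (g : A ⟶ W) (w₂ : i ≫ g = 0)
    (h₂ : (ShortComplex.mk i g w₂).ShortExact) :
    ∃ (A' : C) (a : A ⟶ A') (wa : (j ≫ i) ≫ a = 0)
      (φ : T ⟶ A') (ψ : A' ⟶ W) (wφ : φ ≫ ψ = 0),
      (ShortComplex.mk (j ≫ i) a wa).ShortExact ∧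
      (ShortComplex.mk φ ψ wφ).ShortExact := by
  haveI : Mono j := h₁.mono_f
  haveI : Epi t := h₁.epi_g
  haveI : Mono i := h₂.mono_f
  haveI : Epi g := h₂.epi_g
  haveI : Mono (j ≫ i) := mono_comp j i
  set a : A ⟶ cokernel (j ≫ i) := cokernel.π (j ≫ i) with ha
  have exactA : (ShortComplex.mk (j ≫ i) a (cokernel.condition _)).Exact :=
    ShortComplex.exact_of_g_is_cokernel _ (cokernelIsCokernel _)
  have sesA : (ShortComplex.mk (j ≫ i) a (cokernel.condition _)).ShortExact :=
    ShortComplex.ShortExact.mk' exactA (mono_comp j i) inferInstance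
  set φ : T ⟶ cokernel (j ≫ i) := h₁.exact.desc (i ≫ a)
    (by have h4 := cokernel.condition (j ≫ i); rw [Category.assoc] at h4; exact h4) with hφ
  have htφ : t ≫ φ = i ≫ a := h₁.exact.g_desc _ _
  set ψ : cokernel (j ≫ i) ⟶ W := cokernel.desc (j ≫ i) g
    (by rw [Category.assoc, w₂, comp_zero]) with hψ
  have haψ : a ≫ ψ = g := cokernel.π_desc _ _ _
  have wφ : φ ≫ ψ = 0 := by
    rw [← cancel_epi t, ← Category.assoc, htφ, Category.assoc, haψ, w₂, comp_zero]
  haveI : Epi (a ≫ ψ) := by rw [haψ]; infer_instance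
  haveI epiψ : Epi ψ := epi_of_epi a ψ
  have monoφ : Mono φ := by
    rw [Preadditive.mono_iff_cancel_zero]
    intro Z q hq
    haveI : Epi (pullback.snd t q) := Abelian.epi_pullback_of_epi_f t q
    rw [← cancel_epi (pullback.snd t q), comp_zero, ← pullback.condition]
    have h3 : (pullback.fst t q ≫ i) ≫ a = 0 := by
      rw [Category.assoc, ← htφ]
      calc pullback.fst t q ≫ t ≫ φ = pullback.snd t q ≫ q ≫ φ := by
            rw [← Category.assoc, pullback.condition, Category.assoc]
        _ = 0 := by rw [hq, comp_zero]
    obtain ⟨l, hl⟩ := exactA.lift' (pullback.fst t q ≫ i) h3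
    have hlj : l ≫ j = pullback.fst t q := by
      rw [← cancel_mono i, Category.assoc]; exact hl
    rw [← hlj, Category.assoc, w₁, comp_zero]
  have keyψ : ∀ {Z : C} (u : cokernel (j ≫ i) ⟶ Z), φ ≫ u = 0 →
      ∃ v : W ⟶ Z, ψ ≫ v = u := by
    intro Z u hu
    have hiau : i ≫ a ≫ u = 0 := by
      rw [← Category.assoc, ← htφ, Category.assoc, hu, comp_zero]
    refine ⟨h₂.exact.desc (a ≫ u) hiau, ?_⟩
    rw [← cancel_epi a, ← Category.assoc, haψ]
    exact h₂.exact.g_desc _ _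
  have exactφ : (ShortComplex.mk φ ψ wφ).Exact := by
    apply ShortComplex.exact_of_g_is_cokernel
    refine CokernelCofork.IsColimit.ofπ _ _
      (fun {Z} u hu => (keyψ u hu).choose)
      (fun {Z} u hu => (keyψ u hu).choose_spec)
      (fun {Z} u hu r hr => ?_)
    rw [← cancel_epi ψ, (keyψ u hu).choose_spec]
    exact hr
  exact ⟨cokernel (j ≫ i), a, cokernel.condition _, φ, ψ, wφ, sesA,
    ShortComplex.ShortExact.mk' exactφ monoφ epiψ⟩
lemma bulletOp_mono {S S' T T' : Set C} (h1 : S ⊆ S') (h2 : T ⊆ T') :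
    bulletOp S T ⊆ bulletOp S' T' := by
  apply addClosure_mono
  rintro X ⟨U, V, hU, hV, f, g, w, hse⟩
  exact ⟨U, V, h1 hU, h2 hV, f, g, w, hse⟩

lemma bulletOp_assoc_subset {S T U : Set C} (hS : addClosure S ⊆ S)
    (hT : addClosure T ⊆ T) :
    bulletOp (bulletOp S T) U ⊆ bulletOp S (bulletOp T U) := by
  rintro X ⟨nX, G, hG, sX, pX, hX⟩
  refine mem_addClosure_of_retract_biproduct (fun k => ?_) sX pX hX
  obtain ⟨B, W, hB, hW, f, g, w, hse⟩ := hG k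
  obtain ⟨nB, H, hH, sB, pB, hspB⟩ := hB
  choose Sf Tf hSf hTf ff gf wf hsef using hH
  have hsum := shortExact_biproduct ff gf wf hsef
  obtain ⟨A2, f', g', w', hse', u, v, huv⟩ := shortExact_extend f g w hse sB pB hspB
  obtain ⟨A3, a, wa, φ, ψ, wφ, hsesA, hsesφ⟩ :=
    noether (biproduct.map ff) (biproduct.map gf) _ hsum f' g' w' hse'
  have hSsum : (⨁ Sf) ∈ S := hS ⟨nB, Sf, hSf, 𝟙 _, 𝟙 _, Category.id_comp _⟩
  have hTsum : (⨁ Tf) ∈ T := hT ⟨nB, Tf, hTf, 𝟙 _, 𝟙 _, Category.id_comp _⟩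
  have hA3 : A3 ∈ bulletOp T U :=
    mem_addClosure_self ⟨⨁ Tf, W, hTsum, hW, φ, ψ, wφ, hsesφ⟩
  have hA2 : (A2 : C) ∈ {X : C | ∃ (U' V' : C) (_ : U' ∈ S) (_ : V' ∈ bulletOp T U)
      (f'' : U' ⟶ X) (g'' : X ⟶ V') (w'' : f'' ≫ g'' = 0),
      (ShortComplex.mk f'' g'' w'').ShortExact} :=
    ⟨⨁ Sf, A3, hSsum, hA3, biproduct.map ff ≫ f', a, wa, hsesA⟩
  exact retract_mem_addClosure (mem_addClosure_self hA2) u v huv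

lemma mem_addClosure_biprod_left (T₁ T₂ : C) : T₁ ∈ addClosure {(T₁ ⊞ T₂ : C)} :=
  ⟨1, fun _ => T₁ ⊞ T₂, fun _ => rfl,
    biprod.inl ≫ biproduct.ι (fun _ : Fin 1 => T₁ ⊞ T₂) 0,
    biproduct.π (fun _ : Fin 1 => T₁ ⊞ T₂) 0 ≫ biprod.fst, by
      rw [Category.assoc, biproduct.ι_π_self_assoc, biprod.inl_fst]⟩

lemma mem_addClosure_biprod_right (T₁ T₂ : C) : T₂ ∈ addClosure {(T₁ ⊞ T₂ : C)} :=
  ⟨1, fun _ => T₁ ⊞ T₂, fun _ => rfl,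
    biprod.inr ≫ biproduct.ι (fun _ : Fin 1 => T₁ ⊞ T₂) 0,
    biproduct.π (fun _ : Fin 1 => T₁ ⊞ T₂) 0 ≫ biprod.snd, by
      rw [Category.assoc, biproduct.ι_π_self_assoc, biprod.inr_snd]⟩

lemma bracket_mono_obj {T T' : C} (h : T ∈ addClosure {T'}) :
    ∀ n, bracket T n ⊆ bracket T' n
  | 0 => subset_rfl
  | n + 1 => bulletOp_mono
      (subset_trans (addClosure_mono (by rintro x rfl; exact h)) addClosure_idem)
      (bracket_mono_obj h n)

lemma bracket_one_subset (T : C) : bracket T 1 ⊆ addClosure {T} := by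
  rintro X ⟨nX, G, hG, s, p, hsp⟩
  refine mem_addClosure_of_retract_biproduct (fun k => ?_) s p hsp
  obtain ⟨U, V, hU, hV, f, g, w, hse⟩ := hG k
  have hV' : IsZero V := hV
  haveI : Mono f := hse.mono_f
  have hg0 : g = 0 := hV'.eq_of_tgt g 0
  haveI : Epi f := hse.exact.epi_f hg0
  haveI : IsIso f := isIso_of_mono_of_epi f
  exact retract_mem_addClosure hU (inv f) f (by simp)

lemma bracket_addClosed (T : C) (n : ℕ) (hn : 1 ≤ n) :
    addClosure (bracket T n) ⊆ bracket T n := by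
  cases n with
  | zero => exact absurd hn (by omega)
  | succ k => exact addClosure_idem

lemma bracket_sum (T : C) : ∀ m, 1 ≤ m → ∀ n, 1 ≤ n →
    bulletOp (bracket T m) (bracket T n) ⊆ bracket T (m + n) := by
  intro m
  induction m with
  | zero => exact fun h => absurd h (by omega)
  | succ m ih =>
    intro _ n hn
    rcases Nat.eq_zero_or_pos m with rfl | hm
    · intro X hX
      have h1 : X ∈ bulletOp (addClosure {T}) (bracket T n) :=
        bulletOp_mono (bracket_one_subset T) subset_rfl hX
      have he : 0 + 1 + n = n + 1 := by omega
      rw [he]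
      exact h1
    · intro X hX
      have h2 : X ∈ bulletOp (addClosure {T}) (bracket T (m + n)) :=
        bulletOp_mono subset_rfl (ih hm n hn)
          (bulletOp_assoc_subset addClosure_idem (bracket_addClosed T m hm) hX)
      have he : m + 1 + n = (m + n) + 1 := by omega
      rw [he]
      exact h2

/-- Let `𝒜` be an abelian category, `T₁, T₂` objects of `𝒜` and
`m, n ≥ 1`.  Then `[T₁]_m • [T₂]_n ⊆ [T₁ ⊕ T₂]_{m+n}`. -/
theorem bulletOp_bracket_subset (T₁ T₂ : C) (m n : ℕ) (hm : 1 ≤ m) (hn : 1 ≤ n) :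
    bulletOp (bracket T₁ m) (bracket T₂ n) ⊆ bracket (T₁ ⊞ T₂) (m + n) := by
  intro X hX
  exact bracket_sum (T₁ ⊞ T₂) m hm n hn
    (bulletOp_mono (bracket_mono_obj (mem_addClosure_biprod_left T₁ T₂) m)
      (bracket_mono_obj (mem_addClosure_biprod_right T₁ T₂) n) hX)
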